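/- arXiv:1504.07507 — 4 statements merged into one kernel-verified Lean document; each statement's English description precedes it below -/
import Mathlib

section
/- Let q be a positive rational and let (x, y) be a rational point with y ≠ 0 satisfying y² = x³ − q²x and x, y > 0. Then the rationals a = (x² − q²)/y, b = 2qx/y, c = (x² + q²)/y satisfy a² + b² = c² and a·b = 2q. -/
theorem elliptic_point_to_triangle (q x y : ℚ) (hq : 0 < q)
    (hx : 0 < x) (hy : 0 < y) (hcurve : y^2 = x^3 - q^2 * x) :
    ((x^2 - q^2) / y)^2 + (2 * q * x / y)^2 = ((x^2 + q^2) / y)^2 ∧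
    ((x^2 - q^2) / y) * (2 * q * x / y) = 2 * q := by
  have hy0 : y ≠ 0 := ne_of_gt hy
  constructor
  · field_simp
    ring
  · field_simp
    linear_combination (-1) * hcurve
end

section
/- The maps (a,b,c) ↦ (q(a+c)/b, 2q²(a+c)/b²) and (x,y) ↦ ((x² − q²)/y, 2qx/y, (x² + q²)/y) are mutually inverse bijections between the set A[q] = {(a,b,c) ∈ ℝ³ : a,b,c > 0, a² + b² = c², ab = 2q} and the set E⁺[q] = {(x,y) ∈ ℝ² : x,y > 0, y² = x³ − q²x}. -/
def Atri (q : ℝ) : Set (ℝ × ℝ × ℝ) :=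
  {p | 0 < p.1 ∧ 0 < p.2.1 ∧ 0 < p.2.2 ∧
       p.1^2 + p.2.1^2 = p.2.2^2 ∧ p.1 * p.2.1 = 2 * q}

def EplusCurve (q : ℝ) : Set (ℝ × ℝ) :=
  {p | 0 < p.1 ∧ 0 < p.2 ∧ p.2^2 = p.1^3 - q^2 * p.1}

noncomputable def triToPt (q : ℝ) (p : ℝ × ℝ × ℝ) : ℝ × ℝ :=
  (q * (p.1 + p.2.2) / p.2.1, 2 * q^2 * (p.1 + p.2.2) / p.2.1^2)

noncomputable def ptToTri (q : ℝ) (p : ℝ × ℝ) : ℝ × ℝ × ℝ :=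
  ((p.1^2 - q^2) / p.2, 2 * q * p.1 / p.2, (p.1^2 + q^2) / p.2)

lemma mapsTo_triToPt (q : ℝ) (hq : 0 < q) :
    Set.MapsTo (triToPt q) (Atri q) (EplusCurve q) := by
  rintro ⟨a, b, c⟩ ⟨ha, hb, hc, hpy, hab⟩
  simp only [Atri, EplusCurve, triToPt, Set.mem_setOf_eq] at *
  have hb0 : b ≠ 0 := ne_of_gt hb
  refine ⟨by positivity, by positivity, ?_⟩
  have hq' : q = a*b/2 := by linarith
  subst hq'
  field_simp
  linear_combination hpy

lemma mapsTo_ptToTri (q : ℝ) (hq : 0 < q) :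
    Set.MapsTo (ptToTri q) (EplusCurve q) (Atri q) := by
  rintro ⟨x, y⟩ ⟨hx, hy, hcurve⟩
  simp only [Atri, EplusCurve, ptToTri, Set.mem_setOf_eq] at *
  have hy0 : y ≠ 0 := ne_of_gt hy
  have hxq : q^2 < x^2 := by nlinarith [sq_nonneg y]
  have h1 : 0 < x^2 - q^2 := by linarith
  refine ⟨div_pos h1 hy, by positivity, by positivity, ?_, ?_⟩
  · field_simp; ring
  · field_simp; nlinarith

lemma leftInv (q : ℝ) (hq : 0 < q) :
    Set.LeftInvOn (ptToTri q) (triToPt q) (Atri q) := by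
  rintro ⟨a, b, c⟩ ⟨ha, hb, hc, hpy, hab⟩
  simp only [Atri, Set.mem_setOf_eq] at *
  have hb0 : b ≠ 0 := ne_of_gt hb
  have hac : 0 < a + c := by linarith
  have hy0 : (2 * q^2 * (a + c) / b^2) ≠ 0 := by positivity
  simp only [ptToTri, triToPt]
  refine Prod.ext ?_ (Prod.ext ?_ ?_) <;> simp only <;> field_simp <;> nlinarith [hpy, hab, sq_nonneg b, mul_pos hac hac]

lemma rightInv (q : ℝ) (hq : 0 < q) :
    Set.RightInvOn (ptToTri q) (triToPt q) (EplusCurve q) := by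
  rintro ⟨x, y⟩ ⟨hx, hy, hcurve⟩
  simp only [EplusCurve, Set.mem_setOf_eq] at *
  have hy0 : y ≠ 0 := ne_of_gt hy
  have hb0 : (2 * q * x / y) ≠ 0 := by positivity
  simp only [ptToTri, triToPt]
  refine Prod.ext ?_ ?_ <;> simp only <;> field_simp <;> ring

theorem triangle_elliptic_bijection (q : ℝ) (hq : 0 < q) :
    Set.BijOn (triToPt q) (Atri q) (EplusCurve q) ∧
    Set.BijOn (ptToTri q) (EplusCurve q) (Atri q) ∧
    Set.InvOn (ptToTri q) (triToPt q) (Atri q) (EplusCurve q) := by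
  have hmf := mapsTo_triToPt q hq
  have hmg := mapsTo_ptToTri q hq
  have hinv : Set.InvOn (ptToTri q) (triToPt q) (Atri q) (EplusCurve q) :=
    ⟨leftInv q hq, rightInv q hq⟩
  exact ⟨hinv.bijOn hmf hmg, hinv.symm.bijOn hmg hmf, hinv⟩
end

section
/- If (x, y) with y ≠ 0 lies on the curve y² = x³ − q²x (q > 0 real), then so do the points (x, −y); moreover if additionally x > 0 and a = (x² − q²)/y, b = 2qx/y, c = (x² + q²)/y, then the point (q(b+c)/a, 2q²(b+c)/a²) also lies on the curve. -/
theorem symmetric_points_on_curve (q x y : ℝ) (hq : 0 < q) (hy : y ≠ 0)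
    (h : y^2 = x^3 - q^2 * x) :
    (-y)^2 = x^3 - q^2 * x ∧
    (0 < x →
      (2 * q^2 * ((2 * q * x / y) + ((x^2 + q^2) / y)) / ((x^2 - q^2) / y)^2)^2
        = (q * ((2 * q * x / y) + ((x^2 + q^2) / y)) / ((x^2 - q^2) / y))^3
          - q^2 * (q * ((2 * q * x / y) + ((x^2 + q^2) / y)) / ((x^2 - q^2) / y))) := by
  have ha : x^2 - q^2 ≠ 0 := by
    intro h0
    apply hy
    have h2 : y^2 = 0 := by linear_combination h + x * h0
    exact pow_eq_zero_iff (n := 2) (by norm_num) |>.mp h2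
  refine ⟨by rw [neg_sq]; exact h, fun hx => ?_⟩
  have hxq : x - q ≠ 0 := by
    intro h0; apply ha; nlinarith
  have hxq2 : x + q ≠ 0 := by positivity
  have e1 : q * ((2 * q * x / y) + ((x^2 + q^2) / y)) / ((x^2 - q^2) / y)
      = q * (x + q) / (x - q) := by
    field_simp
    ring
  have e2 : 2 * q^2 * ((2 * q * x / y) + ((x^2 + q^2) / y)) / ((x^2 - q^2) / y)^2
      = 2 * q^2 * y / (x - q)^2 := by
    field_simp
    ring
  rw [e1, e2]
  field_simp
  linear_combination (4 * q) * h
end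

section
/- No perfect square is a congruent number; in particular 1 is not a congruent number: there are no positive rationals a, b, c with a² + b² = c² and a·b = 2. -/
lemma abs2 (a : ℤ) : ((a.natAbs : ℤ)) ^ 2 = a ^ 2 := Int.natAbs_sq a

lemma abs4 (a : ℤ) : ((a.natAbs : ℤ)) ^ 4 = a ^ 4 := by
  rw [show (4:ℕ) = 2*2 by rfl, pow_mul, pow_mul, abs2 a]

lemma natAbs_lt_of_sq_lt {a b : ℤ} (h : a ^ 2 < b ^ 2) : a.natAbs < b.natAbs := by
  have h1 : (a.natAbs:ℤ)^2 < (b.natAbs:ℤ)^2 := by rw [abs2, abs2]; exact h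
  have h2 : (a.natAbs:ℤ) < (b.natAbs:ℤ) := by nlinarith [Int.natCast_nonneg a.natAbs, Int.natCast_nonneg b.natAbs]
  exact_mod_cast h2

lemma natAbs_lt_of_lt {a b : ℤ} (h0 : 0 ≤ a) (h : a < b) : a.natAbs < b.natAbs := by
  omega

-- coprime positive factor of fourth power is a fourth power
lemma four_pow_of_coprime {a b c : ℤ} (h : IsCoprime a b) (heq : a * b = c ^ 4) (ha : 0 < a) :
    ∃ d : ℤ, 0 < d ∧ a = d ^ 4 := by
  obtain ⟨d, hd⟩ := exists_associated_pow_of_mul_eq_pow' h heq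
  rw [Int.associated_iff] at hd
  rcases hd with hd | hd
  · refine ⟨(d.natAbs : ℤ), ?_, by rw [abs4, hd]⟩
    have : d ≠ 0 := by rintro rfl; simp at hd; omega
    exact_mod_cast Int.natAbs_pos.mpr this
  · exfalso; nlinarith [sq_nonneg (d^2), sq_nonneg d]

lemma coprime_of_sum {x t g h : ℤ} (hco : IsCoprime x (t^2)) (hsum : g + h = x)
    (hdiff : h - g = t ^ 2) : IsCoprime g h := by
  rw [Int.isCoprime_iff_gcd_eq_one]
  by_contra hg
  obtain ⟨p, pp, pd⟩ := Nat.exists_prime_and_dvd hg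
  have pg : (p:ℤ) ∣ g := dvd_trans (Int.natCast_dvd_natCast.mpr pd) (Int.gcd_dvd_left g h)
  have ph : (p:ℤ) ∣ h := dvd_trans (Int.natCast_dvd_natCast.mpr pd) (Int.gcd_dvd_right g h)
  have px : (p:ℤ) ∣ x := hsum ▸ dvd_add pg ph
  have pt : (p:ℤ) ∣ t ^ 2 := hdiff ▸ dvd_sub ph pg
  obtain ⟨u, v, huv⟩ := hco
  have h1 : (p:ℤ) ∣ 1 := huv ▸ dvd_add (px.mul_left u) (pt.mul_left v)
  have h2 : p ∣ 1 := by exact_mod_cast h1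
  simp at h2
  exact pp.ne_one h2

lemma step {x s t : ℤ} (hx : 0 < x) (hs : 0 < s) (ht : 0 < t) (hco : IsCoprime x (t ^ 2))
    (h : x ^ 2 = 4 * s ^ 4 + t ^ 4) :
    ∃ e f : ℤ, 0 < e ∧ 0 < f ∧ f.natAbs < x.natAbs ∧ f ^ 4 = e ^ 4 + t ^ 2 := by
  -- x and t are both odd
  have hodd : ¬ (2:ℤ) ∣ x ∧ ¬ (2:ℤ) ∣ t := by
    by_cases h2x : (2:ℤ) ∣ x
    · have h2t4 : (2:ℤ) ∣ t ^ 4 := by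
        have : (2:ℤ) ∣ x ^ 2 := h2x.pow (by norm_num)
        omega
      have h2t : (2:ℤ) ∣ t := Int.prime_two.dvd_of_dvd_pow h2t4
      exfalso
      obtain ⟨u, v, huv⟩ := hco
      have : (2:ℤ) ∣ 1 := huv ▸ dvd_add (h2x.mul_left u) (((h2t.pow two_ne_zero)).mul_left v)
      norm_num at this
    · refine ⟨h2x, fun h2t => ?_⟩
      have h2t4 : (2:ℤ) ∣ t ^ 4 := h2t.pow (by norm_num)
      have h2x2 : (2:ℤ) ∣ x ^ 2 := by omega
      exact h2x (Int.prime_two.dvd_of_dvd_pow h2x2)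
  obtain ⟨hxo, hto⟩ := hodd
  have hto2 : ¬ (2:ℤ) ∣ t ^ 2 := fun hh => hto (Int.prime_two.dvd_of_dvd_pow hh)
  -- x > t^2
  have hxt : t ^ 2 < x := by nlinarith [sq_nonneg s, pow_pos hs 4, pow_pos ht 2]
  -- write x - t^2 = 2g, x + t^2 = 2(g+t^2)
  obtain ⟨g, hg⟩ : (2:ℤ) ∣ x - t ^ 2 := by omega
  have hgpos : 0 < g := by omega
  set h2 : ℤ := g + t ^ 2 with hh2
  have hsum : g + h2 = x := by omega
  have hdiff : h2 - g = t ^ 2 := by omega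
  have hprod : g * h2 = s ^ 4 := by nlinarith [hg, hh2]
  have hcogh : IsCoprime g h2 := coprime_of_sum hco hsum hdiff
  obtain ⟨e, he, hge⟩ := four_pow_of_coprime hcogh hprod hgpos
  obtain ⟨f, hf, hhf⟩ := four_pow_of_coprime hcogh.symm (by rw [mul_comm]; exact hprod) (by positivity)
  refine ⟨e, f, he, hf, ?_, by omega⟩
  apply natAbs_lt_of_lt hf.le
  have h2lt : h2 < x := by omega
  calc f ≤ f ^ 4 := le_self_pow₀ hf (by norm_num)
    _ = h2 := hhf.symm
    _ < x := h2lt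

lemma caseB {x M N y : ℤ} (hx : 0 < x) (hM : 0 < M) (hN : 0 < N) (hco : IsCoprime M N)
    (hMe : Even M) (hy : 0 < y) (hysq : y ^ 2 = 2 * M * N) (hx2 : x ^ 2 = M ^ 2 + N ^ 2) :
    ∃ e f t : ℤ, 0 < e ∧ 0 < f ∧ 0 < t ∧ f.natAbs < x.natAbs ∧ f ^ 4 = e ^ 4 + t ^ 2 := by
  obtain ⟨u, hu⟩ := hMe
  have hMu : M = 2 * u := by omega
  have hupos : 0 < u := by omega
  -- y is even
  have h2y : (2:ℤ) ∣ y := by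
    apply Int.prime_two.dvd_of_dvd_pow (n := 2)
    rw [hysq, hMu]; exact ⟨2 * u * N, by ring⟩
  obtain ⟨y1, hy1⟩ := h2y
  have hy1pos : 0 < y1 := by nlinarith
  have huN : u * N = y1 ^ 2 := by nlinarith [hysq, hMu, hy1]
  have hcouN : IsCoprime u N := hco.of_isCoprime_of_dvd_left ⟨2, by omega⟩
  obtain ⟨s0, hs0⟩ := Int.sq_of_isCoprime hcouN huN
  have hus : u = (s0.natAbs : ℤ) ^ 2 := by
    rcases hs0 with hs | hs
    · rw [abs2]; exact hs
    · exfalso; nlinarith [sq_nonneg s0]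
  obtain ⟨t0, ht0⟩ := Int.sq_of_isCoprime hcouN.symm (by rw [mul_comm]; exact huN)
  have hNt : N = (t0.natAbs : ℤ) ^ 2 := by
    rcases ht0 with hh | hh
    · rw [abs2]; exact hh
    · exfalso; nlinarith [sq_nonneg t0]
  set s : ℤ := (s0.natAbs : ℤ)
  set t : ℤ := (t0.natAbs : ℤ)
  have hspos : 0 < s := by nlinarith [Int.natCast_nonneg s0.natAbs]
  have htpos : 0 < t := by nlinarith [Int.natCast_nonneg t0.natAbs]
  have hcoxN : IsCoprime x N := by
    have h1 : IsCoprime (M ^ 2 + N * N) N := (hco.pow_left).add_mul_left_left N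
    have h2 : IsCoprime (x ^ 2) N := by
      rwa [show x ^ 2 = M ^ 2 + N * N by rw [hx2]; ring]
    exact (IsCoprime.pow_left_iff (by norm_num)).mp h2
  have hcoxt : IsCoprime x (t ^ 2) := by rwa [← hNt]
  have heq : x ^ 2 = 4 * s ^ 4 + t ^ 4 := by rw [hx2, hMu, hus, hNt]; ring
  obtain ⟨e, f, he, hf, hlt, hfe⟩ := step hx hspos htpos hcoxt heq
  exact ⟨e, f, t, he, hf, htpos, hlt, hfe⟩

lemma descent : ∀ k : ℕ, ∀ x y z : ℤ, x.natAbs = k → 0 < x → 0 < y → 0 < z →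
    x ^ 4 = y ^ 4 + z ^ 2 → False := by
  intro k
  induction k using Nat.strong_induction_on with
  | _ k ih =>
  intro x y z hk hx hy hz h
  by_cases hg : Int.gcd x y = 1
  · -- coprime case
    have hcoxy : IsCoprime x y := Int.isCoprime_iff_gcd_eq_one.mpr hg
    have hPT : PythagoreanTriple z (y ^ 2) (x ^ 2) := by
      show z * z + y ^ 2 * y ^ 2 = x ^ 2 * x ^ 2
      linear_combination -h
    have hcozy : Int.gcd z (y ^ 2) = 1 := by
      rw [← Int.isCoprime_iff_gcd_eq_one]
      have h4 : IsCoprime (x ^ 4) (y ^ 4) := hcoxy.pow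
      have h5 : IsCoprime (z ^ 2 + y ^ 4 * 1) (y ^ 4) := by
        rwa [show z ^ 2 + y ^ 4 * 1 = x ^ 4 by linarith]
      have h6 : IsCoprime (z ^ 2) (y ^ 4) := by
        have := h5.add_mul_left_left (-1)
        rwa [show z ^ 2 + y ^ 4 * 1 + y ^ 4 * (-1) = z ^ 2 by ring] at this
      have h7 : IsCoprime (z ^ 2) ((y ^ 2) ^ 2) := by
        rwa [show ((y ^ 2) ^ 2 : ℤ) = y ^ 4 by ring]
      exact (IsCoprime.pow_left_iff (m := 2) (by norm_num)).mp
        ((IsCoprime.pow_right_iff (m := 2) (by norm_num)).mp h7)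
    obtain ⟨m, n, hmn, hx2, hco, hpar⟩ := PythagoreanTriple.coprime_classification.mp ⟨hPT, hcozy⟩
    have hx2' : x ^ 2 = m ^ 2 + n ^ 2 := by
      rcases hx2 with hh | hh
      · exact hh
      · exfalso; nlinarith [sq_nonneg m, sq_nonneg n, pow_pos hx 2]
    rcases hmn with ⟨hzeq, hyeq⟩ | ⟨hzeq, hyeq⟩
    · -- case B : z = m^2 - n^2, y^2 = 2mn
      have hmn_pos : 0 < m * n := by nlinarith [pow_pos hy 2]
      have hm0 : m ≠ 0 := by rintro rfl; simp at hmn_pos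
      have hn0 : n ≠ 0 := by rintro rfl; simp at hmn_pos
      set M : ℤ := (m.natAbs : ℤ) with hM
      set N : ℤ := (n.natAbs : ℤ) with hN
      have hMpos : 0 < M := by rw [hM]; exact_mod_cast Int.natAbs_pos.mpr hm0
      have hNpos : 0 < N := by rw [hN]; exact_mod_cast Int.natAbs_pos.mpr hn0
      have hMN : M * N = m * n := by
        rw [hM, hN, Int.natCast_natAbs, Int.natCast_natAbs, ← abs_mul, abs_of_pos hmn_pos]
      have hcoMN : IsCoprime M N := by
        rw [Int.isCoprime_iff_gcd_eq_one, hM, hN, Int.gcd_def, Int.natAbs_natCast,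
          Int.natAbs_natCast]
        exact hco
      have hyeq' : y ^ 2 = 2 * M * N := by rw [mul_assoc, hMN, hyeq]; ring
      have hx2'' : x ^ 2 = M ^ 2 + N ^ 2 := by rw [hM, hN, abs2, abs2]; exact hx2'
      have hfin : ∃ e f t : ℤ, 0 < e ∧ 0 < f ∧ 0 < t ∧ f.natAbs < x.natAbs ∧
          f ^ 4 = e ^ 4 + t ^ 2 := by
        rcases hpar with ⟨hme, hno⟩ | ⟨hmo, hne⟩
        · have hMe : Even M := by
            rw [hM, Int.even_coe_nat, Int.natAbs_even]
            exact Int.even_iff.mpr hme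
          exact caseB hx hMpos hNpos hcoMN hMe hy hyeq' hx2''
        · have hNe : Even N := by
            rw [hN, Int.even_coe_nat, Int.natAbs_even]
            exact Int.even_iff.mpr hne
          exact caseB hx hNpos hMpos hcoMN.symm hNe hy (by rw [hyeq']; ring)
            (by rw [hx2'']; ring)
      obtain ⟨e, f, t, he, hf, ht, hlt, hfe⟩ := hfin
      exact ih f.natAbs (hk ▸ hlt) f e t rfl hf he ht hfe
    · -- case A : z = 2mn, y^2 = m^2 - n^2
      have hmn_pos : 0 < m * n := by nlinarith
      have hm0 : m ≠ 0 := by rintro rfl; simp at hmn_pos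
      have hn0 : n ≠ 0 := by rintro rfl; simp at hmn_pos
      have heq : (m.natAbs : ℤ) ^ 4 = (n.natAbs : ℤ) ^ 4 + (x * y) ^ 2 := by
        rw [abs4, abs4]
        have h9 : (x * y) ^ 2 = (m ^ 2 + n ^ 2) * (m ^ 2 - n ^ 2) := by
          rw [← hx2', ← hyeq]; ring
        linarith [h9]
      have hlt : m.natAbs < k := by
        rw [← hk]
        apply natAbs_lt_of_sq_lt
        nlinarith [abs2 n, pow_pos (abs_pos.mpr hn0) 2, Int.natCast_natAbs n]
      exact ih m.natAbs hlt (m.natAbs : ℤ) (n.natAbs : ℤ) (x * y) (Int.natAbs_natCast _)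
        (by exact_mod_cast Int.natAbs_pos.mpr hm0) (by exact_mod_cast Int.natAbs_pos.mpr hn0)
        (by positivity) heq
  · -- non-coprime: divide out the gcd
    set d : ℕ := Int.gcd x y with hd
    have hd0 : d ≠ 0 := by
      simp only [hd, ne_eq, Int.gcd_eq_zero_iff, not_and]
      intro hx0; omega
    have hd2 : 2 ≤ d := by omega
    have hdpos : (0:ℤ) < (d:ℤ) := by exact_mod_cast Nat.pos_of_ne_zero hd0
    obtain ⟨x1, hx1⟩ : ((d:ℤ)) ∣ x := Int.gcd_dvd_left x y
    obtain ⟨y1, hy1⟩ : ((d:ℤ)) ∣ y := Int.gcd_dvd_right x y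
    have hx1pos : 0 < x1 := by nlinarith
    have hy1pos : 0 < y1 := by nlinarith
    have h' : ((d:ℤ) * x1) ^ 4 = ((d:ℤ) * y1) ^ 4 + z ^ 2 := by rw [← hx1, ← hy1]; exact h
    have hzdvd : ((d:ℤ) ^ 2) ^ 2 ∣ z ^ 2 := ⟨x1 ^ 4 - y1 ^ 4, by linear_combination -h'⟩
    obtain ⟨z1, hz1⟩ : ((d:ℤ) ^ 2) ∣ z := (Int.pow_dvd_pow_iff two_ne_zero).mp hzdvd
    have hz1pos : 0 < z1 := by nlinarith [pow_pos hdpos 2]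
    have heq1 : x1 ^ 4 = y1 ^ 4 + z1 ^ 2 := by
      have h4 : ((d:ℤ)) ^ 4 ≠ 0 := by positivity
      apply mul_left_cancel₀ h4
      linear_combination h' + (z + (d:ℤ) ^ 2 * z1) * hz1
    have hnab : x.natAbs = d * x1.natAbs := by
      rw [hx1, Int.natAbs_mul, Int.natAbs_natCast]
    have hx1ab : x1.natAbs ≠ 0 := Int.natAbs_ne_zero.mpr hx1pos.ne'
    have hlt : x1.natAbs < x.natAbs := by rw [hnab]; nlinarith [Nat.pos_of_ne_zero hx1ab]
    exact ih x1.natAbs (hk ▸ hlt) x1 y1 z1 rfl hx1pos hy1pos hz1pos heq1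

lemma int_no {X Y Z : ℤ} (hX : X ≠ 0) (hY : Y ≠ 0) (hZ : Z ≠ 0) :
    X ^ 4 ≠ Y ^ 4 + Z ^ 2 := by
  intro h
  apply descent X.natAbs (X.natAbs : ℤ) (Y.natAbs : ℤ) (Z.natAbs : ℤ)
    (Int.natAbs_natCast _)
    (by exact_mod_cast Int.natAbs_pos.mpr hX)
    (by exact_mod_cast Int.natAbs_pos.mpr hY)
    (by exact_mod_cast Int.natAbs_pos.mpr hZ)
  rw [abs4, abs4, abs2]
  exact h

lemma rat_no {u v w : ℚ} (hu : u ≠ 0) (hv : v ≠ 0) (hw : w ≠ 0) :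
    u ^ 4 ≠ v ^ 4 + w ^ 2 := by
  intro h
  have hud : ((u.den : ℚ)) ≠ 0 := by exact_mod_cast u.den_ne_zero
  have hvd : ((v.den : ℚ)) ≠ 0 := by exact_mod_cast v.den_ne_zero
  have hwd : ((w.den : ℚ)) ≠ 0 := by exact_mod_cast w.den_ne_zero
  have hun : (u.num : ℚ) = u * u.den := (div_eq_iff hud).mp (Rat.num_div_den u)
  have hvn : (v.num : ℚ) = v * v.den := (div_eq_iff hvd).mp (Rat.num_div_den v)
  have hwn : (w.num : ℚ) = w * w.den := (div_eq_iff hwd).mp (Rat.num_div_den w)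
  have key : ((u.num * (v.den * w.den) : ℤ) : ℚ) ^ 4 =
      ((v.num * (u.den * w.den) : ℤ) : ℚ) ^ 4 +
      ((w.num * ((u.den : ℤ) ^ 2 * (v.den : ℤ) ^ 2 * w.den) : ℤ) : ℚ) ^ 2 := by
    push_cast
    rw [hun, hvn, hwn]
    linear_combination ((u.den : ℚ) * v.den * w.den) ^ 4 * h
  have keyZ : (u.num * (v.den * w.den)) ^ 4 =
      (v.num * (u.den * w.den)) ^ 4 +
      (w.num * ((u.den : ℤ) ^ 2 * (v.den : ℤ) ^ 2 * w.den)) ^ 2 := by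
    exact_mod_cast key
  refine int_no ?_ ?_ ?_ keyZ
  · exact mul_ne_zero (Rat.num_ne_zero.mpr hu) (by positivity)
  · exact mul_ne_zero (Rat.num_ne_zero.mpr hv) (by positivity)
  · exact mul_ne_zero (Rat.num_ne_zero.mpr hw) (by positivity)

lemma sqrt_two_case {a c : ℚ} (ha : 0 < a) (h : c ^ 2 = 2 * a ^ 2) : False := by
  have ha0 : a ≠ 0 := ha.ne'
  have hr : ((c / a : ℚ) : ℝ) ^ 2 = 2 := by
    push_cast
    field_simp
    linear_combination (by exact_mod_cast h : ((c:ℝ))^2 = 2*(a:ℝ)^2)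
  apply irrational_sqrt_two
  refine ⟨|c / a|, ?_⟩
  have h2 : ((|c / a| : ℚ) : ℝ) = |((c / a : ℚ) : ℝ)| := by push_cast; ring
  rw [h2, ← Real.sqrt_sq_eq_abs, hr]

theorem no_square_is_congruent :
    (∀ q : ℚ, 0 < q → (∃ m : ℚ, q = m^2) →
      ¬ ∃ a b c : ℚ, 0 < a ∧ 0 < b ∧ 0 < c ∧ a^2 + b^2 = c^2 ∧ a * b / 2 = q) ∧
    ¬ ∃ a b c : ℚ, 0 < a ∧ 0 < b ∧ 0 < c ∧ a^2 + b^2 = c^2 ∧ a * b = 2 := by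
  have main : ∀ q : ℚ, 0 < q → (∃ m : ℚ, q = m^2) →
      ¬ ∃ a b c : ℚ, 0 < a ∧ 0 < b ∧ 0 < c ∧ a^2 + b^2 = c^2 ∧ a * b / 2 = q := by
    rintro q hq ⟨m, rfl⟩ ⟨a, b, c, ha, hb, hc, h1, h2⟩
    have hm : m ≠ 0 := by rintro rfl; norm_num at hq
    have hab : a * b = 2 * m ^ 2 := by linarith
    by_cases habeq : a = b
    · subst habeq
      exact sqrt_two_case ha (by linarith)
    · have hd0 : a ^ 2 - b ^ 2 ≠ 0 := by
        intro hd
        have : (a - b) * (a + b) = 0 := by linear_combination hd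
        rcases mul_eq_zero.mp this with hh | hh
        · exact habeq (by linarith)
        · linarith
      apply rat_no hc.ne' (by positivity : (2 : ℚ) * m ≠ 0) hd0
      linear_combination -(a ^ 2 + b ^ 2 + c ^ 2) * h1 + 4 * (a * b + 2 * m ^ 2) * hab
  refine ⟨main, ?_⟩
  intro ⟨a, b, c, ha, hb, hc, h1, h2⟩
  exact main 1 one_pos ⟨1, by norm_num⟩ ⟨a, b, c, ha, hb, hc, h1, by rw [h2]; norm_num⟩
end
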